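/- (Gagliardo–Nirenberg, d=2) There is a constant C such that for all f ∈ H¹(ℝ²), ‖f‖_{L⁴(ℝ²)}² ≤ C ‖f‖_{L²} ‖∇f‖_{L²}. -/

import Mathlib

open MeasureTheory Filter

lemma limit_zero_of_integrable_atBot {G : ℝ → ℝ} (hG : Integrable G) {l : ℝ}
    (h : Tendsto G atBot (nhds l)) : l = 0 := by
  by_contra hl
  have hpos : (0:ℝ) < |l| / 2 := by positivity
  have h2 : ∀ᶠ x in atBot, |l| / 2 ≤ |G x| := by
    filter_upwards [h (Metric.ball_mem_nhds l hpos)] with x hx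
    simp only [Set.mem_preimage, Metric.mem_ball, Real.dist_eq] at hx
    have h3 : |l| - |G x| ≤ |G x - l| := by
      have := abs_sub_abs_le_abs_sub l (G x)
      rwa [abs_sub_comm] at this
    linarith
  obtain ⟨a, ha⟩ := eventually_atBot.1 h2
  have hfin : ∫⁻ x, ‖G x‖₊ ∂volume < ⊤ := hG.hasFiniteIntegral
  have hbig : (⊤ : ENNReal) ≤ ∫⁻ x, ‖G x‖₊ ∂volume := by
    calc (⊤ : ENNReal) = ENNReal.ofReal (|l| / 2) * volume (Set.Iic a) := by
          rw [Real.volume_Iic, ENNReal.mul_top]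
          simp [ENNReal.ofReal_eq_zero, not_le, hpos]
      _ = ∫⁻ _ in Set.Iic a, ENNReal.ofReal (|l| / 2) ∂volume := by
          rw [setLIntegral_const]
      _ ≤ ∫⁻ x in Set.Iic a, (‖G x‖₊ : ENNReal) ∂volume := by
          refine setLIntegral_mono_ae
            (hG.aestronglyMeasurable.aemeasurable.nnnorm.coe_nnreal_ennreal.restrict) ?_
          filter_upwards with x hx
          rw [← enorm_eq_nnnorm, Real.enorm_eq_ofReal_abs]
          exact ENNReal.ofReal_le_ofReal (ha x hx)
      _ ≤ ∫⁻ x, ‖G x‖₊ ∂volume := setLIntegral_le_lintegral _ _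
  exact (lt_irrefl _ (lt_of_le_of_lt hbig hfin)).elim

lemma sq_le_integral_deriv {u : ℝ → ℝ} (hu : Differentiable ℝ u)
    (h2 : Integrable (fun x => u x ^ 2) volume)
    (h3 : Integrable (fun x => u x * deriv u x) volume) (b : ℝ) :
    u b ^ 2 ≤ ∫ t, 2 * |u t * deriv u t| := by
  set G' : ℝ → ℝ := fun x => 2 * (u x * deriv u x) with hG'def
  have hG' : ∀ x, HasDerivAt (fun x => u x ^ 2) (G' x) x := by
    intro x
    have := ((hu x).hasDerivAt.fun_pow 2)
    simpa [G', pow_one, mul_comm, mul_assoc, mul_left_comm] using this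
  have hG'int : Integrable G' volume := h3.const_mul 2
  have hftc : ∀ a : ℝ, (fun x => u x ^ 2) a = u b ^ 2 - ∫ x in a..b, G' x := by
    intro a
    have := intervalIntegral.integral_eq_sub_of_hasDerivAt
      (f := fun x => u x ^ 2) (f' := G') (a := a) (b := b)
      (fun x _ => hG' x) hG'int.intervalIntegrable
    show u a ^ 2 = u b ^ 2 - ∫ x in a..b, G' x
    rw [this]; ring
  have htend : Tendsto (fun x => u x ^ 2) atBot (nhds (u b ^ 2 - ∫ x in Set.Iic b, G' x)) := by
    have h4 : Tendsto (fun a : ℝ => ∫ x in a..b, G' x) atBot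
        (nhds (∫ x in Set.Iic b, G' x)) :=
      intervalIntegral_tendsto_integral_Iic b hG'int.integrableOn tendsto_id
    have h5 : Tendsto (fun a : ℝ => u b ^ 2 - ∫ x in a..b, G' x) atBot
        (nhds (u b ^ 2 - ∫ x in Set.Iic b, G' x)) := tendsto_const_nhds.sub h4
    exact h5.congr (fun a => (hftc a).symm)
  have hzero : u b ^ 2 - ∫ x in Set.Iic b, G' x = 0 :=
    limit_zero_of_integrable_atBot h2 htend
  have habs : Integrable (fun x => 2 * |u x * deriv u x|) volume := by
    simpa [abs_mul] using (h3.abs.const_mul 2)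
  calc u b ^ 2 = ∫ x in Set.Iic b, G' x := by linarith
    _ ≤ ∫ x in Set.Iic b, 2 * |u x * deriv u x| := by
        refine integral_mono hG'int.integrableOn habs.integrableOn ?_
        intro x
        simp only [G']
        have := le_abs_self (u x * deriv u x); linarith
    _ ≤ ∫ x, 2 * |u x * deriv u x| := by
        refine setIntegral_le_integral habs ?_
        filter_upwards with x
        positivity

lemma slice_bound {g : ℝ × ℝ → ℝ} (hg : Differentiable ℝ g) {D : ℝ × ℝ → ℝ}
    (hD : Measurable D) (hD0 : ∀ z, 0 ≤ D z)
    (hbound : ∀ z, |fderiv ℝ g z (1, 0)| ≤ D z)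
    (hg2 : ∫⁻ z, (‖g z‖₊ : ENNReal) ^ 2 ∂volume ≠ ⊤)
    (hD2 : ∫⁻ z, (‖D z‖₊ : ENNReal) ^ 2 ∂volume ≠ ⊤) :
    ∀ᵐ y : ℝ, ∀ x : ℝ,
      ENNReal.ofReal (g (x, y) ^ 2)
        ≤ 2 * ∫⁻ t, (‖g (t, y)‖₊ : ENNReal) * ‖D (t, y)‖₊ ∂volume := by
  have gc : Continuous g := hg.continuous
  have hgm : Measurable g := gc.measurable
  have hFg : Measurable fun z : ℝ × ℝ => (‖g z‖₊ : ENNReal) ^ 2 :=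
    (hgm.nnnorm.coe_nnreal_ennreal).pow_const 2
  have hFD : Measurable fun z : ℝ × ℝ => (‖D z‖₊ : ENNReal) ^ 2 :=
    (hD.nnnorm.coe_nnreal_ennreal).pow_const 2
  have h1 : ∀ᵐ y : ℝ, (∫⁻ x, (‖g (x, y)‖₊ : ENNReal) ^ 2 ∂volume) < ⊤ := by
    refine ae_lt_top (Measurable.lintegral_prod_right (hFg.comp measurable_swap)) ?_
    rw [← lintegral_prod_symm _ hFg.aemeasurable]
    exact hg2
  have h2 : ∀ᵐ y : ℝ, (∫⁻ x, (‖D (x, y)‖₊ : ENNReal) ^ 2 ∂volume) < ⊤ := by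
    refine ae_lt_top (Measurable.lintegral_prod_right (hFD.comp measurable_swap)) ?_
    rw [← lintegral_prod_symm _ hFD.aemeasurable]
    exact hD2
  filter_upwards [h1, h2] with y hy1 hy2
  intro x
  set u : ℝ → ℝ := fun t => g (t, y) with hudef
  have huc : Continuous u := gc.comp (continuous_id.prodMk continuous_const)
  have hud : ∀ t, HasDerivAt u (fderiv ℝ g (t, y) (1, 0)) t := by
    intro t
    have h := (hg (t, y)).hasFDerivAt.comp_hasDerivAt t
      ((hasDerivAt_id t).prodMk (hasDerivAt_const t y))
    simp at h; exact h
  have hu : Differentiable ℝ u := fun t => (hud t).differentiableAt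
  have hderiv : deriv u = fun t => fderiv ℝ g (t, y) (1, 0) := funext fun t => (hud t).deriv
  have hubd : ∀ t, |deriv u t| ≤ D (t, y) := by
    intro t; rw [hderiv]; exact hbound (t, y)
  have ha : Integrable (fun t => u t ^ 2) volume := by
    refine ⟨(huc.pow 2).aestronglyMeasurable, ?_⟩
    unfold HasFiniteIntegral
    calc ∫⁻ t, (‖u t ^ 2‖₊ : ENNReal) ∂volume
        = ∫⁻ t, (‖u t‖₊ : ENNReal) ^ 2 ∂volume := by
          congr 1; funext t; rw [nnnorm_pow]; push_cast; ring
      _ < ⊤ := hy1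
  have hb : Integrable (fun t => D (t, y) ^ 2) volume := by
    refine ⟨((hD.comp measurable_prodMk_right).pow_const 2).aestronglyMeasurable, ?_⟩
    unfold HasFiniteIntegral
    calc ∫⁻ t, (‖D (t, y) ^ 2‖₊ : ENNReal) ∂volume
        = ∫⁻ t, (‖D (t, y)‖₊ : ENNReal) ^ 2 ∂volume := by
          congr 1; funext t; rw [nnnorm_pow]; push_cast; ring
      _ < ⊤ := hy2
  have h3 : Integrable (fun t => u t * deriv u t) volume := by
    refine Integrable.mono ((ha.add hb).div_const 2)
      (huc.aestronglyMeasurable.mul (measurable_deriv u).aestronglyMeasurable) ?_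
    filter_upwards with t
    have h4 : |u t * deriv u t| ≤ |u t| * D (t, y) := by
      rw [abs_mul]
      exact mul_le_mul_of_nonneg_left (hubd t) (abs_nonneg _)
    have h5 : 2 * |u t| * D (t, y) ≤ |u t| ^ 2 + D (t, y) ^ 2 := two_mul_le_add_sq _ _
    have h6 : (0:ℝ) ≤ (u t ^ 2 + D (t, y) ^ 2) / 2 := by positivity
    simp only [Pi.add_apply, Real.norm_eq_abs]
    rw [abs_of_nonneg h6]
    have h7 : |u t| ^ 2 = u t ^ 2 := sq_abs _
    nlinarith [abs_nonneg (u t), hD0 (t, y)]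
  have key : u x ^ 2 ≤ ∫ t, 2 * |u t * deriv u t| := sq_le_integral_deriv hu ha h3 x
  have habs : Integrable (fun t => 2 * |u t * deriv u t|) volume := h3.abs.const_mul 2
  calc ENNReal.ofReal (g (x, y) ^ 2)
      ≤ ENNReal.ofReal (∫ t, 2 * |u t * deriv u t|) := ENNReal.ofReal_le_ofReal key
    _ = ∫⁻ t, ENNReal.ofReal (2 * |u t * deriv u t|) ∂volume := by
        refine ofReal_integral_eq_lintegral_ofReal habs ?_
        filter_upwards with t; positivity
    _ ≤ ∫⁻ t, 2 * ((‖g (t, y)‖₊ : ENNReal) * ‖D (t, y)‖₊) ∂volume := by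
        refine lintegral_mono fun t => ?_
        rw [ENNReal.ofReal_mul (by norm_num : (0:ℝ) ≤ 2), ENNReal.ofReal_ofNat]
        refine mul_le_mul_right ?_ 2
        calc ENNReal.ofReal |u t * deriv u t|
            ≤ ENNReal.ofReal (|u t| * D (t, y)) := by
              refine ENNReal.ofReal_le_ofReal ?_
              rw [abs_mul]
              exact mul_le_mul_of_nonneg_left (hubd t) (abs_nonneg _)
          _ = (‖g (t, y)‖₊ : ENNReal) * ‖D (t, y)‖₊ := by
              rw [ENNReal.ofReal_mul (abs_nonneg _), ← enorm_eq_nnnorm, Real.enorm_eq_ofReal_abs,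
                ← enorm_eq_nnnorm, Real.enorm_eq_ofReal_abs, abs_of_nonneg (hD0 (t, y))]
    _ = 2 * ∫⁻ t, (‖g (t, y)‖₊ : ENNReal) * ‖D (t, y)‖₊ ∂volume := by
        refine lintegral_const_mul 2 ?_
        exact ((hgm.comp measurable_prodMk_right).nnnorm.coe_nnreal_ennreal).mul
          ((hD.comp measurable_prodMk_right).nnnorm.coe_nnreal_ennreal)

lemma ennreal_sq_rpow_half (x : ENNReal) : (x ^ 2) ^ ((1:ℝ)/2) = x := by
  rw [← ENNReal.rpow_two, ← ENNReal.rpow_mul]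
  norm_num

lemma eLpNorm_two_eq {α E : Type*} [MeasurableSpace α] {μ : Measure α}
    [NormedAddCommGroup E] (h : α → E) :
    eLpNorm h 2 μ = (∫⁻ x, (‖h x‖₊ : ENNReal) ^ 2 ∂μ) ^ ((1:ℝ)/2) := by
  rw [eLpNorm_eq_lintegral_rpow_enorm_toReal (by norm_num) (by norm_num)]
  simp only [ENNReal.toReal_ofNat, ENNReal.rpow_two, enorm_eq_nnnorm]

lemma eLpNorm_four_eq {α E : Type*} [MeasurableSpace α] {μ : Measure α}
    [NormedAddCommGroup E] (h : α → E) :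
    eLpNorm h 4 μ = (∫⁻ x, (‖h x‖₊ : ENNReal) ^ 4 ∂μ) ^ ((1:ℝ)/4) := by
  rw [eLpNorm_eq_lintegral_rpow_enorm_toReal (by norm_num) (by norm_num)]
  have : ((4 : ENNReal)).toReal = ((4:ℕ):ℝ) := by norm_num
  simp only [this, ENNReal.rpow_natCast, enorm_eq_nnnorm]
  norm_num

lemma memLp2_lintegral_ne_top {α E : Type*} [MeasurableSpace α] {μ : Measure α}
    [NormedAddCommGroup E] {h : α → E} (hh : MemLp h 2 μ) :
    ∫⁻ x, (‖h x‖₊ : ENNReal) ^ 2 ∂μ ≠ ⊤ := by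
  have h2 := hh.2
  rw [eLpNorm_two_eq] at h2
  intro hcon
  rw [hcon] at h2
  simp [ENNReal.top_rpow_of_pos (by norm_num : (0:ℝ) < 1/2)] at h2

/-- Ladyzhenskaya's inequality in dimension 2: there is `C` such that
`‖f‖_{L⁴(ℝ²)}² ≤ C ‖f‖_{L²} ‖∇f‖_{L²}` for all `f ∈ H¹(ℝ²)`. -/
theorem ladyzhenskaya_dim2 :
    ∃ C > 0, ∀ f : EuclideanSpace ℝ (Fin 2) → ℝ,
      Differentiable ℝ f → MemLp f 2 volume → MemLp (fderiv ℝ f) 2 volume →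
      (eLpNorm f 4 volume) ^ 2
        ≤ ENNReal.ofReal C * eLpNorm f 2 volume * eLpNorm (fderiv ℝ f) 2 volume := by
  classical
  set κe : (ℝ × ℝ) ≃L[ℝ] EuclideanSpace ℝ (Fin 2) :=
    ((EuclideanSpace.equiv (Fin 2) ℝ).trans (ContinuousLinearEquiv.finTwoArrow ℝ ℝ)).symm
    with hκdef
  set c : ℝ := ‖(κe : (ℝ × ℝ) →L[ℝ] EuclideanSpace ℝ (Fin 2))‖ with hcdef
  have hc0 : (0:ℝ) ≤ c := norm_nonneg _
  refine ⟨2 * (c + 1), by positivity, ?_⟩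
  intro f hf hf2 hdf2
  set e : EuclideanSpace ℝ (Fin 2) ≃ᵐ ℝ × ℝ :=
    (MeasurableEquiv.toLp 2 (Fin 2 → ℝ)).symm.trans MeasurableEquiv.finTwoArrow with hedef
  have he : MeasurePreserving e volume volume :=
    (volume_preserving_finTwoArrow ℝ).comp
      (EuclideanSpace.volume_preserving_symm_measurableEquiv_toLp (Fin 2))
  have hinv : ∀ x, κe (e x) = x := fun x => by ext i; fin_cases i <;> rfl
  -- transfer of lintegrals
  have htrans : ∀ F : EuclideanSpace ℝ (Fin 2) → ENNReal, Measurable F →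
      ∫⁻ z, F (κe z) ∂volume = ∫⁻ x, F x ∂volume := by
    intro F hF
    have h := he.lintegral_comp (f := fun z => F (κe z))
      (hF.comp κe.continuous.measurable)
    simp only [hinv] at h
    exact h.symm
  set g : ℝ × ℝ → ℝ := fun z => f (κe z) with hgdef
  have hg : Differentiable ℝ g := hf.comp κe.differentiable
  have hgm : Measurable g := hg.continuous.measurable
  set D : ℝ × ℝ → ℝ := fun z => (c + 1) * ‖fderiv ℝ f (κe z)‖ with hDdef
  have hDm : Measurable D :=
    measurable_const.mul ((measurable_fderiv ℝ f).norm.comp κe.continuous.measurable)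
  have hD0 : ∀ z, 0 ≤ D z := fun z => mul_nonneg (by linarith) (norm_nonneg _)
  have hgfd : ∀ z, fderiv ℝ g z
      = (fderiv ℝ f (κe z)).comp (κe : (ℝ × ℝ) →L[ℝ] EuclideanSpace ℝ (Fin 2)) := by
    intro z
    exact ((hf (κe z)).hasFDerivAt.comp z (κe.hasFDerivAt)).fderiv
  have hdirbound : ∀ (z v : ℝ × ℝ), ‖v‖ ≤ 1 → |fderiv ℝ g z v| ≤ D z := by
    intro z v hv
    rw [hgfd z]
    calc |((fderiv ℝ f (κe z)).comp (κe : (ℝ × ℝ) →L[ℝ] _)) v|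
        = ‖((fderiv ℝ f (κe z)).comp (κe : (ℝ × ℝ) →L[ℝ] _)) v‖ := (Real.norm_eq_abs _).symm
      _ ≤ ‖(fderiv ℝ f (κe z)).comp (κe : (ℝ × ℝ) →L[ℝ] _)‖ * ‖v‖ :=
          ContinuousLinearMap.le_opNorm _ _
      _ ≤ (‖fderiv ℝ f (κe z)‖ * c) * 1 := by
          refine mul_le_mul ?_ hv (norm_nonneg v) (by positivity)
          exact ContinuousLinearMap.opNorm_comp_le _ _
      _ ≤ D z := by
          show ‖fderiv ℝ f (κe z)‖ * c * 1 ≤ (c + 1) * ‖fderiv ℝ f (κe z)‖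
          have := norm_nonneg (fderiv ℝ f (κe z))
          nlinarith
  -- finiteness of the relevant integrals
  have hg2 : ∫⁻ z, (‖g z‖₊ : ENNReal) ^ 2 ∂volume ≠ ⊤ := by
    rw [htrans (fun x => (‖f x‖₊ : ENNReal) ^ 2)
      ((hf.continuous.measurable.nnnorm.coe_nnreal_ennreal).pow_const 2)]
    exact memLp2_lintegral_ne_top hf2
  have hD2eq : ∫⁻ z, (‖D z‖₊ : ENNReal) ^ 2 ∂volume
      = (ENNReal.ofReal (c + 1)) ^ 2 * ∫⁻ x, (‖fderiv ℝ f x‖₊ : ENNReal) ^ 2 ∂volume := by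
    have h1 : ∀ z, (‖D z‖₊ : ENNReal) ^ 2
        = (ENNReal.ofReal (c + 1)) ^ 2 * (‖fderiv ℝ f (κe z)‖₊ : ENNReal) ^ 2 := by
      intro z
      rw [hDdef]
      have : (‖(c + 1) * ‖fderiv ℝ f (κe z)‖‖₊ : ENNReal)
          = ENNReal.ofReal (c + 1) * (‖fderiv ℝ f (κe z)‖₊ : ENNReal) := by
        rw [← enorm_eq_nnnorm, Real.enorm_eq_ofReal_abs, abs_mul, ENNReal.ofReal_mul (abs_nonneg _),
          abs_norm, ofReal_norm, abs_of_nonneg (by linarith : (0:ℝ) ≤ c + 1), enorm_eq_nnnorm]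
      rw [this, mul_pow]
    calc ∫⁻ z, (‖D z‖₊ : ENNReal) ^ 2 ∂volume
        = ∫⁻ z, (ENNReal.ofReal (c + 1)) ^ 2
            * (‖fderiv ℝ f (κe z)‖₊ : ENNReal) ^ 2 ∂volume := by
          exact lintegral_congr h1
      _ = (ENNReal.ofReal (c + 1)) ^ 2
            * ∫⁻ z, (‖fderiv ℝ f (κe z)‖₊ : ENNReal) ^ 2 ∂volume := by
          exact lintegral_const_mul _
            ((((measurable_fderiv ℝ f).comp κe.continuous.measurable).nnnorm.coe_nnreal_ennreal).pow_const 2)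
      _ = (ENNReal.ofReal (c + 1)) ^ 2 * ∫⁻ x, (‖fderiv ℝ f x‖₊ : ENNReal) ^ 2 ∂volume := by
          rw [htrans (fun x => (‖fderiv ℝ f x‖₊ : ENNReal) ^ 2)
            (((measurable_fderiv ℝ f).nnnorm.coe_nnreal_ennreal).pow_const 2)]
  have hD2 : ∫⁻ z, (‖D z‖₊ : ENNReal) ^ 2 ∂volume ≠ ⊤ := by
    rw [hD2eq]
    exact ENNReal.mul_ne_top (by simp [ENNReal.pow_ne_top, ENNReal.ofReal_ne_top])
      (memLp2_lintegral_ne_top hdf2)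
  -- the two slice bounds
  set Q : ℝ × ℝ → ENNReal := fun z => (‖g z‖₊ : ENNReal) * ‖D z‖₊ with hQdef
  have hQm : Measurable Q :=
    (hgm.nnnorm.coe_nnreal_ennreal).mul (hDm.nnnorm.coe_nnreal_ennreal)
  set P : ℝ → ENNReal := fun y => ∫⁻ t, Q (t, y) ∂volume with hPdef
  set H : ℝ → ENNReal := fun x => ∫⁻ s, Q (x, s) ∂volume with hHdef
  have hPa : ∀ᵐ y : ℝ, ∀ x : ℝ, ENNReal.ofReal (g (x, y) ^ 2) ≤ 2 * P y := by
    refine slice_bound hg hDm hD0 (fun z => hdirbound z (1, 0) ?_) hg2 hD2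
    simp [Prod.norm_def]
  -- swapped version
  have hswapmp : MeasurePreserving (Prod.swap : ℝ × ℝ → ℝ × ℝ) volume volume :=
    Measure.measurePreserving_swap
  have hHa : ∀ᵐ y : ℝ, ∀ x : ℝ, ENNReal.ofReal (g (y, x) ^ 2) ≤ 2 * H y := by
    have hg' : Differentiable ℝ (fun z : ℝ × ℝ => g z.swap) :=
      hg.comp (ContinuousLinearEquiv.prodComm ℝ ℝ ℝ).differentiable
    have hD' : Measurable (fun z : ℝ × ℝ => D z.swap) := hDm.comp measurable_swap
    have hD0' : ∀ z : ℝ × ℝ, 0 ≤ D z.swap := fun z => hD0 _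
    have hbound' : ∀ z : ℝ × ℝ, |fderiv ℝ (fun z : ℝ × ℝ => g z.swap) z (1, 0)| ≤ D z.swap := by
      intro z
      have hfd : fderiv ℝ (fun z : ℝ × ℝ => g z.swap) z
          = (fderiv ℝ g z.swap).comp
            ((ContinuousLinearEquiv.prodComm ℝ ℝ ℝ : (ℝ × ℝ) ≃L[ℝ] ℝ × ℝ)
              : (ℝ × ℝ) →L[ℝ] ℝ × ℝ) :=
        ((hg z.swap).hasFDerivAt.comp z
          (ContinuousLinearEquiv.prodComm ℝ ℝ ℝ).hasFDerivAt).fderiv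
      rw [hfd]
      have : ((fderiv ℝ g z.swap).comp
          ((ContinuousLinearEquiv.prodComm ℝ ℝ ℝ : (ℝ × ℝ) ≃L[ℝ] ℝ × ℝ)
            : (ℝ × ℝ) →L[ℝ] ℝ × ℝ)) (1, 0) = fderiv ℝ g z.swap (0, 1) := rfl
      rw [this]
      exact hdirbound z.swap (0, 1) (by simp [Prod.norm_def])
    have hg2' : ∫⁻ z : ℝ × ℝ, (‖g z.swap‖₊ : ENNReal) ^ 2 ∂volume ≠ ⊤ := by
      rw [hswapmp.lintegral_comp ((hgm.nnnorm.coe_nnreal_ennreal).pow_const 2)]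
      exact hg2
    have hD2' : ∫⁻ z : ℝ × ℝ, (‖D z.swap‖₊ : ENNReal) ^ 2 ∂volume ≠ ⊤ := by
      rw [hswapmp.lintegral_comp ((hDm.nnnorm.coe_nnreal_ennreal).pow_const 2)]
      exact hD2
    have h := slice_bound hg' hD' hD0' hbound' hg2' hD2'
    filter_upwards [h] with y hy
    intro x
    have := hy x
    simp only [Prod.swap_prod_mk] at this
    refine this.trans ?_
    refine mul_le_mul_right (le_of_eq ?_) 2
    rw [hHdef]
  -- lift to the product and integrate
  have hPm : Measurable P :=
    Measurable.lintegral_prod_right (f := fun y t => Q (t, y)) (hQm.comp measurable_swap)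
  have hHm : Measurable H :=
    Measurable.lintegral_prod_right (f := fun x s => Q (x, s)) hQm
  have hprod : ∀ᵐ z : ℝ × ℝ ∂volume,
      (‖g z‖₊ : ENNReal) ^ 4 ≤ (2 * H z.1) * (2 * P z.2) := by
    have hy_ae : ∀ᵐ z : ℝ × ℝ ∂volume,
        ∀ x : ℝ, ENNReal.ofReal (g (x, z.2) ^ 2) ≤ 2 * P z.2 :=
      (Measure.quasiMeasurePreserving_snd
        (μ := (volume : Measure ℝ)) (ν := (volume : Measure ℝ))).tendsto_ae.eventually hPa
    have hx_ae : ∀ᵐ z : ℝ × ℝ ∂volume,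
        ∀ x : ℝ, ENNReal.ofReal (g (z.1, x) ^ 2) ≤ 2 * H z.1 :=
      (Measure.quasiMeasurePreserving_fst
        (μ := (volume : Measure ℝ)) (ν := (volume : Measure ℝ))).tendsto_ae.eventually hHa
    filter_upwards [hy_ae, hx_ae] with z h1 h2
    have hsq : ENNReal.ofReal (g z ^ 2) = (‖g z‖₊ : ENNReal) ^ 2 := by
      rw [← enorm_eq_nnnorm, Real.enorm_eq_ofReal_abs, ← ENNReal.ofReal_pow (abs_nonneg _), sq_abs]
    have e1 : (‖g z‖₊ : ENNReal) ^ 2 ≤ 2 * H z.1 := by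
      rw [← hsq]
      have := h2 z.2
      simpa using this
    have e2 : (‖g z‖₊ : ENNReal) ^ 2 ≤ 2 * P z.2 := by
      rw [← hsq]
      have := h1 z.1
      simpa using this
    calc (‖g z‖₊ : ENNReal) ^ 4 = (‖g z‖₊ : ENNReal) ^ 2 * (‖g z‖₊ : ENNReal) ^ 2 := by ring
      _ ≤ (2 * H z.1) * (2 * P z.2) := mul_le_mul' e1 e2
  set IQ : ENNReal := ∫⁻ z, Q z ∂volume with hIQdef
  have hintH : ∫⁻ x, H x ∂volume = IQ := (lintegral_prod _ hQm.aemeasurable).symm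
  have hintP : ∫⁻ y, P y ∂volume = IQ := (lintegral_prod_symm _ hQm.aemeasurable).symm
  have hmain : ∫⁻ z, (‖g z‖₊ : ENNReal) ^ 4 ∂volume ≤ (2 * IQ) ^ 2 := by
    calc ∫⁻ z, (‖g z‖₊ : ENNReal) ^ 4 ∂volume
        ≤ ∫⁻ z : ℝ × ℝ, (2 * H z.1) * (2 * P z.2) ∂volume := lintegral_mono_ae hprod
      _ = (∫⁻ x, 2 * H x ∂volume) * (∫⁻ y, 2 * P y ∂volume) :=
          lintegral_prod_mul ((measurable_const.mul hHm).aemeasurable)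
            ((measurable_const.mul hPm).aemeasurable)
      _ = (2 * IQ) * (2 * IQ) := by
          rw [lintegral_const_mul 2 hHm, lintegral_const_mul 2 hPm, hintH, hintP]
      _ = (2 * IQ) ^ 2 := by ring
  -- Hölder
  have hHolder : IQ ≤ (∫⁻ z, (‖g z‖₊ : ENNReal) ^ 2 ∂volume) ^ ((1:ℝ)/2)
      * (∫⁻ z, (‖D z‖₊ : ENNReal) ^ 2 ∂volume) ^ ((1:ℝ)/2) := by
    have hconj : Real.HolderConjugate 2 2 := Real.HolderConjugate.two_two
    have h := ENNReal.lintegral_mul_le_Lp_mul_Lq volume hconj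
      (hgm.nnnorm.coe_nnreal_ennreal.aemeasurable)
      (hDm.nnnorm.coe_nnreal_ennreal.aemeasurable)
    simp only [Pi.mul_apply, ENNReal.rpow_two] at h
    exact h
  -- put it together
  have hlhs : (eLpNorm f 4 volume) ^ 2
      = (∫⁻ z, (‖g z‖₊ : ENNReal) ^ 4 ∂volume) ^ ((1:ℝ)/2) := by
    rw [eLpNorm_four_eq, htrans (fun x => (‖f x‖₊ : ENNReal) ^ 4)
      ((hf.continuous.measurable.nnnorm.coe_nnreal_ennreal).pow_const 4) |>.symm]
    rw [← ENNReal.rpow_natCast _ 2, ← ENNReal.rpow_mul]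
    norm_num
    rfl
  have hS : (∫⁻ z, (‖g z‖₊ : ENNReal) ^ 2 ∂volume) ^ ((1:ℝ)/2) = eLpNorm f 2 volume := by
    rw [eLpNorm_two_eq, htrans (fun x => (‖f x‖₊ : ENNReal) ^ 2)
      ((hf.continuous.measurable.nnnorm.coe_nnreal_ennreal).pow_const 2)]
  have hT : (∫⁻ z, (‖D z‖₊ : ENNReal) ^ 2 ∂volume) ^ ((1:ℝ)/2)
      = ENNReal.ofReal (c + 1) * eLpNorm (fderiv ℝ f) 2 volume := by
    rw [hD2eq, ENNReal.mul_rpow_of_nonneg _ _ (by norm_num : (0:ℝ) ≤ 1/2),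
      ennreal_sq_rpow_half, eLpNorm_two_eq]
  calc (eLpNorm f 4 volume) ^ 2
      = (∫⁻ z, (‖g z‖₊ : ENNReal) ^ 4 ∂volume) ^ ((1:ℝ)/2) := hlhs
    _ ≤ ((2 * IQ) ^ 2) ^ ((1:ℝ)/2) :=
        ENNReal.rpow_le_rpow hmain (by norm_num)
    _ = 2 * IQ := ennreal_sq_rpow_half _
    _ ≤ 2 * ((∫⁻ z, (‖g z‖₊ : ENNReal) ^ 2 ∂volume) ^ ((1:ℝ)/2)
          * (∫⁻ z, (‖D z‖₊ : ENNReal) ^ 2 ∂volume) ^ ((1:ℝ)/2)) :=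
        mul_le_mul_right hHolder 2
    _ = 2 * (eLpNorm f 2 volume * (ENNReal.ofReal (c + 1) * eLpNorm (fderiv ℝ f) 2 volume)) := by
        rw [hS, hT]
    _ = ENNReal.ofReal (2 * (c + 1)) * eLpNorm f 2 volume * eLpNorm (fderiv ℝ f) 2 volume := by
        rw [ENNReal.ofReal_mul (by norm_num : (0:ℝ) ≤ 2), ENNReal.ofReal_ofNat]
        ring
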